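/- For a linear system ẋ = Ax with solution x(t) = e^{At} x₀, if c·(A x) ≤ 0 for all x in a compact convex set S = { x | Cx ≤ d } whenever the constraint c·x = d_i is active, and this holds for all faces, then S is positively invariant: x₀ ∈ S implies x(t) ∈ S for all t ≥ 0. -/

import Mathlib

open Matrix NormedSpace Metric Filter

theorem nagumo_deriv_exp_mulVec {n : ℕ} (A : Matrix (Fin n) (Fin n) ℝ) (x₀ : Fin n → ℝ) (t : ℝ) :
    HasDerivAt (fun s : ℝ => exp (s • A) *ᵥ x₀) (A *ᵥ (exp (t • A) *ᵥ x₀)) t := by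
  letI : SeminormedRing (Matrix (Fin n) (Fin n) ℝ) := Matrix.linftyOpSemiNormedRing
  letI : NormedRing (Matrix (Fin n) (Fin n) ℝ) := Matrix.linftyOpNormedRing
  letI : NormedAlgebra ℝ (Matrix (Fin n) (Fin n) ℝ) := Matrix.linftyOpNormedAlgebra
  have h1 : HasDerivAt (fun s : ℝ => exp (s • A)) (A * exp (t • A)) t :=
    hasDerivAt_exp_smul_const' A t
  let lm : (Matrix (Fin n) (Fin n) ℝ) →ₗ[ℝ] (Fin n → ℝ) :=
    { toFun := fun M => M *ᵥ x₀, map_add' := fun M N => Matrix.add_mulVec M N x₀,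
      map_smul' := fun c M => by simp [Matrix.smul_mulVec] }
  have h2 := (lm.toContinuousLinearMap.hasFDerivAt.comp_hasDerivAt t h1)
  rw [Matrix.mulVec_mulVec]; exact h2

theorem nagumo_quad_bound {n : ℕ} (A : Matrix (Fin n) (Fin n) ℝ) (w : Fin n → ℝ) :
    w ⬝ᵥ (A *ᵥ w) ≤ (∑ i, ∑ j, |A i j|) * (w ⬝ᵥ w) := by
  have hsq : ∀ i, w i ^ 2 ≤ w ⬝ᵥ w := by
    intro i
    have h : w ⬝ᵥ w = ∑ k, w k ^ 2 := by simp [dotProduct, sq]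
    rw [h]
    exact Finset.single_le_sum (fun k _ => sq_nonneg (w k)) (Finset.mem_univ i)
  have key : ∀ i j, w i * (A i j * w j) ≤ |A i j| * (w ⬝ᵥ w) := by
    intro i j
    have h2 : |w i| * |w j| ≤ w ⬝ᵥ w := by
      nlinarith [sq_nonneg (|w i| - |w j|), sq_abs (w i), sq_abs (w j), hsq i, hsq j]
    calc w i * (A i j * w j) ≤ |w i * (A i j * w j)| := le_abs_self _
      _ = |A i j| * (|w i| * |w j|) := by rw [abs_mul, abs_mul]; ring
      _ ≤ |A i j| * (w ⬝ᵥ w) := mul_le_mul_of_nonneg_left h2 (abs_nonneg _)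
  calc w ⬝ᵥ (A *ᵥ w) = ∑ i, ∑ j, w i * (A i j * w j) := by
        simp [dotProduct, mulVec, Finset.mul_sum]
    _ ≤ ∑ i, ∑ j, |A i j| * (w ⬝ᵥ w) :=
        Finset.sum_le_sum fun i _ => Finset.sum_le_sum fun j _ => key i j
    _ = (∑ i, ∑ j, |A i j|) * (w ⬝ᵥ w) := by
        rw [Finset.sum_mul]; exact Finset.sum_congr rfl fun i _ => (Finset.sum_mul _ _ _).symm

theorem nagumo_proj_inner_le {E : Type*} [NormedAddCommGroup E] [InnerProductSpace ℝ E]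
    {K : Set E} (hK : Convex ℝ K) {u p : E} (hp : p ∈ K)
    (hmin : ∀ z ∈ K, dist u p ≤ dist u z) {z : E} (hz : z ∈ K) :
    inner ℝ (u - p) (z - p) ≤ (0 : ℝ) := by
  by_contra hcon
  push_neg at hcon
  set a : ℝ := inner ℝ (u - p) (z - p) with ha
  have hzp : z - p ≠ 0 := by
    intro h0
    rw [ha, h0, inner_zero_right] at hcon
    exact lt_irrefl 0 hcon
  have hnz : 0 < ‖z - p‖ ^ 2 := pow_pos (norm_pos_iff.mpr hzp) 2
  set lam : ℝ := min 1 (a / ‖z - p‖ ^ 2) with hlam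
  have hlam0 : 0 < lam := lt_min one_pos (div_pos hcon hnz)
  have hlam1 : lam ≤ 1 := min_le_left _ _
  have hlama : lam * ‖z - p‖ ^ 2 ≤ a := by
    rw [← le_div_iff₀ hnz]; exact min_le_right _ _
  have hmem : p + lam • (z - p) ∈ K := by
    have h := hK hp hz (by linarith : (0:ℝ) ≤ 1 - lam) hlam0.le (by ring)
    have he : (1 - lam) • p + lam • z = p + lam • (z - p) := by
      rw [smul_sub, sub_smul, one_smul]; abel
    rwa [he] at h
  have hd := hmin _ hmem
  have hexp : dist u (p + lam • (z - p)) ^ 2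
      = ‖u - p‖ ^ 2 - 2 * lam * a + lam ^ 2 * ‖z - p‖ ^ 2 := by
    rw [dist_eq_norm]
    have he : u - (p + lam • (z - p)) = (u - p) - lam • (z - p) := by abel
    rw [he, norm_sub_sq_real, real_inner_smul_right, norm_smul, Real.norm_eq_abs,
      mul_pow, sq_abs, ← ha]
    ring
  have hd2 : dist u p ^ 2 ≤ dist u (p + lam • (z - p)) ^ 2 :=
    pow_le_pow_left₀ dist_nonneg hd 2
  rw [hexp, dist_eq_norm] at hd2
  nlinarith [hlam0, hcon, hlama]

section Test
variable {n N : ℕ}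


set_option maxHeartbeats 2000000 in
theorem nagumo_condition_implies_positive_invariance_linear
    {n N : ℕ} (A : Matrix (Fin n) (Fin n) ℝ)
    (C : Matrix (Fin N) (Fin n) ℝ) (d : Fin N → ℝ)
    (S : Set (Fin n → ℝ)) (hS : S = {x | ∀ i, (C *ᵥ x) i ≤ d i})
    (hcomp : IsCompact S) (hconv : Convex ℝ S)
    (hnagumo : ∀ x ∈ S, ∀ i : Fin N, (C *ᵥ x) i = d i → C i ⬝ᵥ (A *ᵥ x) ≤ 0) :
    ∀ x₀ ∈ S, ∀ t : ℝ, 0 ≤ t → (NormedSpace.exp (t • A)) *ᵥ x₀ ∈ S := by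
  intro x₀ hx₀ t ht
  set cle : (Fin n → ℝ) ≃L[ℝ] EuclideanSpace ℝ (Fin n) :=
    (PiLp.continuousLinearEquiv 2 ℝ (fun _ : Fin n => ℝ)).symm with hcle
  have hinner : ∀ u v : Fin n → ℝ, (inner ℝ (cle u) (cle v) : ℝ) = u ⬝ᵥ v := by
    intro u v
    have hco : ∀ (w : Fin n → ℝ) i, (cle w) i = w i := fun w i => rfl
    simp [PiLp.inner_apply, RCLike.inner_apply, dotProduct, hco, mul_comm]
  -- the image set
  set S' : Set (EuclideanSpace ℝ (Fin n)) := cle '' S with hS'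
  have hS'ne : S'.Nonempty := ⟨cle x₀, x₀, hx₀, rfl⟩
  have hS'comp : IsCompact S' := hcomp.image cle.continuous
  have hS'closed : IsClosed S' := hS'comp.isClosed
  have hS'conv : Convex ℝ S' := by
    have h := hconv.linear_image (cle.toLinearEquiv.toLinearMap)
    simpa using h
  -- the nagumo perturbation
  have hnag' : ∀ p ∈ S, ∃ δ : ℝ, 0 < δ ∧ p + δ • (A *ᵥ p) ∈ S := by
    intro p hp
    have hp' : ∀ i, (C *ᵥ p) i ≤ d i := by rw [hS] at hp; exact hp
    have hrw : ∀ (δ : ℝ) (i), (C *ᵥ (p + δ • (A *ᵥ p))) i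
        = (C *ᵥ p) i + δ * (C i ⬝ᵥ (A *ᵥ p)) := by
      intro δ i
      rw [Matrix.mulVec_add, Matrix.mulVec_smul]
      simp only [Pi.add_apply, Pi.smul_apply, smul_eq_mul]
      rfl
    have hev : ∀ᶠ δ in nhdsWithin 0 (Set.Ioi (0:ℝ)),
        ∀ i, (C *ᵥ (p + δ • (A *ᵥ p))) i ≤ d i := by
      rw [Filter.eventually_all]
      intro i
      rcases eq_or_lt_of_le (hp' i) with heq | hlt
      · have hA := hnagumo p hp i heq
        filter_upwards [self_mem_nhdsWithin] with δ hδ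
        rw [hrw]
        have := mul_nonpos_of_nonneg_of_nonpos (le_of_lt hδ) hA
        linarith [heq]
      · have hten : Filter.Tendsto (fun δ : ℝ => (C *ᵥ p) i + δ * (C i ⬝ᵥ (A *ᵥ p)))
            (nhdsWithin 0 (Set.Ioi (0:ℝ))) (nhds ((C *ᵥ p) i)) := by
          have hc : Continuous (fun δ : ℝ => (C *ᵥ p) i + δ * (C i ⬝ᵥ (A *ᵥ p))) := by
            continuity
          have := hc.tendsto 0
          simp only [zero_mul, add_zero] at this
          exact this.mono_left nhdsWithin_le_nhds
        filter_upwards [hten.eventually_le_const hlt] with δ hδ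
        rw [hrw]; exact hδ
    obtain ⟨δ, hδprop, hδpos⟩ := (hev.and self_mem_nhdsWithin).exists
    exact ⟨δ, hδpos, by rw [hS]; exact hδprop⟩

  -- trajectory
  set x : ℝ → (Fin n → ℝ) := fun s => exp (s • A) *ᵥ x₀ with hxdef
  set y : ℝ → EuclideanSpace ℝ (Fin n) := fun s => cle (x s) with hydef
  have hyd : ∀ s, HasDerivAt y (cle (A *ᵥ x s)) s := fun s =>
    (cle.hasFDerivAt.comp_hasDerivAt s (nagumo_deriv_exp_mulVec A x₀ s))
  have ycont : Continuous y := continuous_iff_continuousAt.2 fun s => (hyd s).continuousAt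
  set K : ℝ := ∑ i, ∑ j, |A i j| with hKdef
  set g : ℝ → ℝ := fun s => infDist (y s) S' ^ 2 * Real.exp (-(2*K)*s) with hgdef
  have gcont : Continuous g := by
    apply Continuous.mul
    · exact ((continuous_infDist_pt S').comp ycont).pow 2
    · exact Real.continuous_exp.comp (by continuity)
  have hg0 : g 0 = 0 := by
    have hx0 : x 0 = x₀ := by
      rw [hxdef]; simp [zero_smul, exp_zero, Matrix.one_mulVec]
    have hy0 : y 0 ∈ S' := ⟨x₀, hx₀, by rw [hydef]; simp [hx0]⟩
    rw [hgdef]; simp [infDist_zero_of_mem hy0]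
  have claim : ∀ ε : ℝ, 0 < ε → ∀ s : ℝ, 0 ≤ s → g s ≤ ε * s := by
    intro ε hε
    by_contra hcon
    push_neg at hcon
    obtain ⟨s₁, hs₁0, hs₁⟩ := hcon
    set B : Set ℝ := {s : ℝ | 0 ≤ s ∧ ε * s < g s} with hB
    have hBne : B.Nonempty := ⟨s₁, hs₁0, hs₁⟩
    have hBbdd : BddBelow B := ⟨0, fun b hb => hb.1⟩
    set t₀ : ℝ := sInf B with ht₀def
    have ht₀0 : 0 ≤ t₀ := le_csInf hBne fun b hb => hb.1
    have hnotB : t₀ ∉ B := by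
      intro hmem
      have ht₀pos : 0 < t₀ := by
        rcases hmem with ⟨h1, h2⟩
        rcases h1.lt_or_eq with h | h
        · exact h
        · exfalso; rw [← h, hg0] at h2; nlinarith
      have hU : IsOpen {s : ℝ | ε * s < g s} :=
        isOpen_lt (continuous_const.mul continuous_id) gcont
      obtain ⟨δ, hδ0, hball⟩ := Metric.isOpen_iff.1 hU t₀ hmem.2
      set s₂ := max 0 (t₀ - δ/2) with hs₂
      have hs₂0 : 0 ≤ s₂ := le_max_left _ _
      have hs₂lt : s₂ < t₀ := max_lt ht₀pos (by linarith)
      have hs₂ball : s₂ ∈ Metric.ball t₀ δ := by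
        rw [Metric.mem_ball, Real.dist_eq, abs_sub_lt_iff]
        constructor
        · linarith
        · have := le_max_right 0 (t₀ - δ/2); linarith
      have hmem2 : s₂ ∈ B := ⟨hs₂0, hball hs₂ball⟩
      exact absurd (csInf_le hBbdd hmem2) (not_le.2 hs₂lt)
    have ht₀g : g t₀ ≤ ε * t₀ := by
      by_contra h; push_neg at h; exact hnotB ⟨ht₀0, h⟩
    obtain ⟨p, hpS', hpdist⟩ := hS'comp.exists_infDist_eq_dist hS'ne (y t₀)
    have hVI : ∀ z ∈ S', (inner ℝ (y t₀ - p) (z - p) : ℝ) ≤ 0 := by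
      intro z hz
      refine nagumo_proj_inner_le hS'conv hpS' (fun z' hz' => ?_) hz
      rw [← hpdist]; exact infDist_le_dist_of_mem hz'
    obtain ⟨pb, hpbS, hpb⟩ := hpS'
    have hpmem : p ∈ S' := ⟨pb, hpbS, hpb⟩
    have hyt : y t₀ = cle (x t₀) := rfl
    have hwcle : y t₀ - p = cle (x t₀ - pb) := by rw [hyt, ← hpb, ← map_sub]
    set v : EuclideanSpace ℝ (Fin n) := cle (A *ᵥ x t₀) with hv
    have h1 : (inner ℝ (y t₀ - p) v : ℝ) ≤ K * ‖y t₀ - p‖^2 := by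
      have hAmv : A *ᵥ x t₀ = A *ᵥ pb + A *ᵥ (x t₀ - pb) := by
        rw [← Matrix.mulVec_add, add_sub_cancel]
      have hdot : (inner ℝ (y t₀ - p) v : ℝ)
          = (x t₀ - pb) ⬝ᵥ (A *ᵥ pb) + (x t₀ - pb) ⬝ᵥ (A *ᵥ (x t₀ - pb)) := by
        rw [hwcle, hv, hinner, hAmv, dotProduct_add]
      obtain ⟨δ, hδ0, hδS⟩ := hnag' pb hpbS
      have hterm1 : (x t₀ - pb) ⬝ᵥ (A *ᵥ pb) ≤ 0 := by
        have hz : cle (pb + δ • (A *ᵥ pb)) ∈ S' := ⟨_, hδS, rfl⟩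
        have h := hVI _ hz
        have he : cle (pb + δ • (A *ᵥ pb)) - p = cle (δ • (A *ᵥ pb)) := by
          rw [← hpb, ← map_sub, add_sub_cancel_left]
        rw [he, hwcle, hinner, dotProduct_smul, smul_eq_mul] at h
        nlinarith [hδ0]
      have hnormw : ‖y t₀ - p‖^2 = (x t₀ - pb) ⬝ᵥ (x t₀ - pb) := by
        rw [← real_inner_self_eq_norm_sq, hwcle, hinner]
      have hterm2 : (x t₀ - pb) ⬝ᵥ (A *ᵥ (x t₀ - pb)) ≤ K * ‖y t₀ - p‖^2 := by
        rw [hnormw, hKdef]; exact nagumo_quad_bound A (x t₀ - pb)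
      linarith [hdot, hterm1, hterm2]
    -- the barrier function and its derivative
    have hder1 : HasDerivAt (fun s => (inner ℝ (y s - p) (y s - p) : ℝ))
        ((inner ℝ (y t₀ - p) v : ℝ) + (inner ℝ v (y t₀ - p) : ℝ)) t₀ :=
      HasDerivAt.inner ℝ ((hyd t₀).sub_const p) ((hyd t₀).sub_const p)
    have hder2 : HasDerivAt (fun s => ‖y s - p‖^2) (2 * (inner ℝ (y t₀ - p) v : ℝ)) t₀ := by
      have hfun : (fun s => ‖y s - p‖^2) = fun s => (inner ℝ (y s - p) (y s - p) : ℝ) :=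
        funext fun s => (real_inner_self_eq_norm_sq _).symm
      rw [hfun]
      convert hder1 using 1
      rw [real_inner_comm v (y t₀ - p)]; ring
    have hder3 : HasDerivAt (fun s : ℝ => Real.exp (-(2*K)*s))
        (Real.exp (-(2*K)*t₀) * (-(2*K))) t₀ := by
      have h := ((hasDerivAt_id t₀).const_mul (-(2*K))).exp
      simpa [mul_comm] using h
    set ψ : ℝ → ℝ := fun s => ‖y s - p‖^2 * Real.exp (-(2*K)*s) with hψdef
    set D : ℝ := 2 * (inner ℝ (y t₀ - p) v : ℝ) * Real.exp (-(2*K)*t₀)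
      + ‖y t₀ - p‖^2 * (Real.exp (-(2*K)*t₀) * (-(2*K))) with hD
    have hψd : HasDerivAt ψ D t₀ := hder2.mul hder3
    have hD0 : D ≤ 0 := by
      have hEpos : (0:ℝ) < Real.exp (-(2*K)*t₀) := Real.exp_pos _
      rw [hD]
      nlinarith [mul_le_mul_of_nonneg_right h1 hEpos.le]
    have hgle : ∀ s, g s ≤ ψ s := by
      intro s
      have h1' : infDist (y s) S' ≤ ‖y s - p‖ := by
        rw [← dist_eq_norm]; exact infDist_le_dist_of_mem hpmem
      have h2' : infDist (y s) S' ^ 2 ≤ ‖y s - p‖^2 :=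
        pow_le_pow_left₀ infDist_nonneg h1' 2
      exact mul_le_mul_of_nonneg_right h2' (Real.exp_pos _).le
    have hgeq : g t₀ = ψ t₀ := by
      rw [hgdef, hψdef]
      simp only []
      rw [hpdist, dist_eq_norm]
    have hseq : ∀ k : ℕ, ∃ s ∈ B, s < t₀ + 1/(k+1) :=
      fun k => Real.lt_sInf_add_pos hBne (by positivity)
    choose u hu1 hu2 using hseq
    have hugt : ∀ k, t₀ < u k := by
      intro k
      rcases (csInf_le hBbdd (hu1 k)).lt_or_eq with h | h
      · exact h
      · exact absurd (show t₀ ∈ B by rw [ht₀def, h]; exact hu1 k) hnotB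
    have hulim : Tendsto u atTop (nhds t₀) := by
      have hup : Tendsto (fun k : ℕ => t₀ + 1/((k:ℝ)+1)) atTop (nhds t₀) := by
        have h := tendsto_one_div_add_atTop_nhds_zero_nat (𝕜 := ℝ)
        simpa using tendsto_const_nhds.add h
      exact tendsto_of_tendsto_of_tendsto_of_le_of_le tendsto_const_nhds hup
        (fun k => (hugt k).le) (fun k => (hu2 k).le)
    have hune : Tendsto u atTop (nhdsWithin t₀ {t₀}ᶜ) :=
      tendsto_nhdsWithin_iff.mpr ⟨hulim, Filter.Eventually.of_forall fun k => (hugt k).ne'⟩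
    have hslope := hasDerivAt_iff_tendsto_slope.mp hψd
    have hcomp2 := hslope.comp hune
    have heps : ∀ k, ε ≤ slope ψ t₀ (u k) := by
      intro k
      rw [slope_def_field, le_div_iff₀ (sub_pos.2 (hugt k))]
      have hgk : ε * u k < g (u k) := (hu1 k).2
      have h3 := hgle (u k)
      linarith [ht₀g, hgeq]
    have hfin : ε ≤ D := ge_of_tendsto hcomp2 (Filter.Eventually.of_forall heps)
    linarith
  -- conclude
  have hgt : g t ≤ 0 := by
    by_contra h
    push_neg at h
    have hεpos : 0 < g t / (2*(t+1)) := div_pos h (by linarith)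
    have hcl := claim _ hεpos t ht
    have hlt : (g t / (2*(t+1))) * t < g t := by
      rw [div_mul_eq_mul_div, div_lt_iff₀ (by linarith : (0:ℝ) < 2*(t+1))]
      nlinarith
    linarith
  have hinf : infDist (y t) S' = 0 := by
    have hE : (0:ℝ) < Real.exp (-(2*K)*t) := Real.exp_pos _
    have h2 : infDist (y t) S' ^ 2 ≤ 0 := by
      rw [hgdef] at hgt
      simp only [] at hgt
      nlinarith
    have h4 : infDist (y t) S' ≤ 0 := by
      nlinarith [infDist_nonneg (x := y t) (s := S')]
    exact le_antisymm h4 infDist_nonneg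
  have hytS : y t ∈ S' := (hS'closed.mem_iff_infDist_zero hS'ne).2 hinf
  obtain ⟨q, hqS, hq⟩ := hytS
  have hqx : q = x t := cle.injective hq
  show x t ∈ S
  rw [← hqx]
  exact hqS
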